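/- arXiv:2311.01053 — 2 statements merged into one kernel-verified Lean document; each statement's English description precedes it below -/
import Mathlib

section
/- Let b ≠ 0 and z₀ be real constants, let (u_t)_{t≥1} be an i.i.d. sequence of real random variables with E[u₁] = 0 and Var(u₁) < ∞, and let (x_t)_{t≥1} be a sequence of real random variables with x_t / t → 0 almost surely as t → ∞. Set z_t = z₀ + b·t + x_t and assume z_t ≠ 0 almost surely for every t. Then for every γ > 0 the sequence T^{-γ} · Σ_{t=1}^{T} u_t / z_t converges to 0 in probability as T → ∞. Equivalently, writing α̂₁ = T^{-1} Σ_{t=1}^{T} y_t / z_t for the ratio-based estimator in the model y_t = α z_t + u_t, one has T^{1-γ}(α̂₁ − α) → 0 in probability. -/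
open MeasureTheory ProbabilityTheory Filter
open scoped Topology

/-- Harmonic sum bound. -/
lemma aux_harmonic_le (T : ℕ) : ∑ t ∈ Finset.Icc 1 T, (1 : ℝ) / t ≤ 1 + Real.log T := by
  induction T with
  | zero => simp
  | succ T ih =>
    rw [Finset.sum_Icc_succ_top (Nat.one_le_iff_ne_zero.2 (Nat.succ_ne_zero T))]
    rcases Nat.eq_zero_or_pos T with hT | hT
    · subst hT; norm_num
    · have hT1 : (1 : ℝ) ≤ (T : ℝ) := by exact_mod_cast hT
      have hpos : (0 : ℝ) < (T : ℝ) / (T + 1) := by positivity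
      have hlog := Real.log_le_sub_one_of_pos hpos
      rw [Real.log_div (by positivity) (by positivity)] at hlog
      have hcast : ((T + 1 : ℕ) : ℝ) = (T : ℝ) + 1 := by push_cast; ring
      rw [hcast]
      have h1 : (T : ℝ) / (T + 1) - 1 = -(1 / ((T : ℝ) + 1)) := by field_simp; ring
      linarith [ih]

/-- Abel-type bound: if partial sums of a nonneg sequence grow linearly,
then the sums of `a t / t` grow logarithmically. -/
lemma aux_sum_div_le {a : ℕ → ℝ} {C : ℝ} (hC : 0 ≤ C) (ha : ∀ t, 0 ≤ a t)
    (hS : ∀ T : ℕ, 1 ≤ T → ∑ t ∈ Finset.Icc 1 T, a t ≤ C * T) (T : ℕ) :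
    ∑ t ∈ Finset.Icc 1 T, a t / t ≤ C * (1 + Real.log T) + C := by
  have key : ∀ T : ℕ, ∑ t ∈ Finset.Icc 1 T, a t / t ≤
      C * (∑ t ∈ Finset.Icc 1 T, (1 : ℝ) / t) + (∑ t ∈ Finset.Icc 1 T, a t) / T := by
    intro T
    induction T with
    | zero => simp
    | succ T ih =>
      rw [Finset.sum_Icc_succ_top (Nat.one_le_iff_ne_zero.2 (Nat.succ_ne_zero T)),
        Finset.sum_Icc_succ_top (Nat.one_le_iff_ne_zero.2 (Nat.succ_ne_zero T)),
        Finset.sum_Icc_succ_top (Nat.one_le_iff_ne_zero.2 (Nat.succ_ne_zero T))]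
      have hcast : ((T + 1 : ℕ) : ℝ) = (T : ℝ) + 1 := by push_cast; ring
      rw [hcast]
      set s := ∑ t ∈ Finset.Icc 1 T, a t with hs
      have hsnn : 0 ≤ s := Finset.sum_nonneg fun t _ => ha t
      have hkey : s / T ≤ C / ((T : ℝ) + 1) + s / ((T : ℝ) + 1) := by
        rcases Nat.eq_zero_or_pos T with hT | hT
        · subst hT
          simp only [hs, Finset.Icc_self, Nat.cast_zero, div_zero] at *
          simp only [Finset.Icc_eq_empty_of_lt (by norm_num : (1:ℕ) > 0)]
          positivity
        · have hTpos : (0 : ℝ) < (T : ℝ) := by exact_mod_cast hT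
          have hsC : s ≤ C * T := hS T hT
          rw [div_add_div _ _ (by positivity : ((T:ℝ)+1) ≠ 0) (by positivity : ((T:ℝ)+1) ≠ 0)]
          rw [div_le_div_iff₀ hTpos (by positivity)]
          nlinarith
      have : s / T + a (T + 1) / ((T : ℝ) + 1) ≤
          C * (1 / ((T : ℝ) + 1)) + (s + a (T + 1)) / ((T : ℝ) + 1) := by
        rw [add_div]
        have : C * (1 / ((T : ℝ) + 1)) = C / ((T : ℝ) + 1) := by ring
        rw [this]
        linarith [hkey]
      linarith [ih]
  refine le_trans (key T) ?_
  have h1 : C * (∑ t ∈ Finset.Icc 1 T, (1 : ℝ) / t) ≤ C * (1 + Real.log T) :=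
    mul_le_mul_of_nonneg_left (aux_harmonic_le T) hC
  have h2 : (∑ t ∈ Finset.Icc 1 T, a t) / T ≤ C := by
    rcases Nat.eq_zero_or_pos T with hT | hT
    · subst hT; simpa using hC
    · have hTpos : (0 : ℝ) < (T : ℝ) := by exact_mod_cast hT
      rw [div_le_iff₀ hTpos]
      exact hS T hT
  linarith

/-- Deterministic core lemma. -/
lemma aux_det_tendsto {v zz : ℕ → ℝ} {c C : ℝ} (hc : 0 < c) (hC : 0 ≤ C)
    (hzl : ∀ᶠ t : ℕ in atTop, c * t ≤ |zz t|)
    (hS : ∀ T : ℕ, 1 ≤ T → ∑ t ∈ Finset.Icc 1 T, |v t| ≤ C * T)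
    {γ : ℝ} (hγ : 0 < γ) :
    Tendsto (fun T : ℕ => (T : ℝ) ^ (-γ) * ∑ t ∈ Finset.Icc 1 T, v t / zz t)
      atTop (𝓝 0) := by
  obtain ⟨N, hN⟩ := eventually_atTop.1 hzl
  set D := ∑ t ∈ Finset.range N, |v t / zz t| with hD
  have hDnn : 0 ≤ D := Finset.sum_nonneg fun t _ => abs_nonneg _
  -- key pointwise bound
  have claim : ∀ T : ℕ,
      |∑ t ∈ Finset.Icc 1 T, v t / zz t| ≤ D + (1 / c) * (C * (1 + Real.log T) + C) := by
    intro T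
    refine le_trans (Finset.abs_sum_le_sum_abs _ _) ?_
    have hterm : ∀ t ∈ Finset.Icc 1 T, |v t / zz t| ≤
        (if t < N then |v t / zz t| else 0) + (1 / c) * (|v t| / t) := by
      intro t ht
      obtain ⟨ht1, _⟩ := Finset.mem_Icc.1 ht
      by_cases h : t < N
      · simp only [h, if_true]
        have : 0 ≤ (1 / c) * (|v t| / t) := by positivity
        linarith
      · simp only [h, if_false, zero_add]
        push_neg at h
        have htpos : (0 : ℝ) < (t : ℝ) := by exact_mod_cast ht1
        have hzb := hN t h
        have hczt : (0 : ℝ) < c * t := by positivity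
        have : |v t / zz t| ≤ |v t| / (c * t) := by
          rw [abs_div]
          exact div_le_div_of_nonneg_left (abs_nonneg _) hczt hzb
        refine le_trans this (le_of_eq ?_)
        field_simp
      
    refine le_trans (Finset.sum_le_sum hterm) ?_
    rw [Finset.sum_add_distrib]
    have h1 : ∑ t ∈ Finset.Icc 1 T, (if t < N then |v t / zz t| else 0) ≤ D := by
      rw [Finset.sum_ite, Finset.sum_const_zero, add_zero]
      refine Finset.sum_le_sum_of_subset_of_nonneg ?_ (fun t _ _ => abs_nonneg _)
      intro t ht
      simp only [Finset.mem_filter, Finset.mem_Icc, Finset.mem_range] at *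
      exact ht.2
    have h2 : ∑ t ∈ Finset.Icc 1 T, (1 / c) * (|v t| / t) ≤
        (1 / c) * (C * (1 + Real.log T) + C) := by
      rw [← Finset.mul_sum]
      refine mul_le_mul_of_nonneg_left ?_ (by positivity)
      exact aux_sum_div_le hC (fun t => abs_nonneg _) hS T
    linarith
  -- squeeze
  have hb1 : Tendsto (fun T : ℕ => ((T : ℝ) ^ (-γ))) atTop (𝓝 0) :=
    (tendsto_rpow_neg_atTop hγ).comp tendsto_natCast_atTop_atTop
  have hb2 : Tendsto (fun T : ℕ => (T : ℝ) ^ (-γ) * Real.log T) atTop (𝓝 0) := by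
    have h := (isLittleO_log_rpow_atTop hγ).tendsto_div_nhds_zero
    have h' : Tendsto (fun x : ℝ => x ^ (-γ) * Real.log x) atTop (𝓝 0) := by
      refine h.congr' ?_
      filter_upwards [eventually_gt_atTop (0 : ℝ)] with x hx
      rw [Real.rpow_neg hx.le]
      field_simp
    exact h'.comp tendsto_natCast_atTop_atTop
  set A := D + (1 / c) * (C + C) with hA
  set B := (1 / c) * C with hB
  have hbound : Tendsto (fun T : ℕ => (T : ℝ) ^ (-γ) * A + ((T : ℝ) ^ (-γ) * Real.log T) * B)
      atTop (𝓝 0) := by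
    have := (hb1.mul_const A).add (hb2.mul_const B)
    simpa using this
  refine squeeze_zero_norm (fun T => ?_) hbound
  have hpow : (0 : ℝ) ≤ (T : ℝ) ^ (-γ) := Real.rpow_nonneg (Nat.cast_nonneg T) _
  rw [Real.norm_eq_abs, abs_mul, abs_of_nonneg hpow]
  calc (T : ℝ) ^ (-γ) * |∑ t ∈ Finset.Icc 1 T, v t / zz t|
      ≤ (T : ℝ) ^ (-γ) * (D + (1 / c) * (C * (1 + Real.log T) + C)) :=
        mul_le_mul_of_nonneg_left (claim T) hpow
    _ = (T : ℝ) ^ (-γ) * A + ((T : ℝ) ^ (-γ) * Real.log T) * B := by rw [hA, hB]; ring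

/-- Superconsistency of the ratio-based estimator: in the cointegrated model
`y t = α * z t + u t` with `z t = z₀ + b * t + x t`, `b ≠ 0`, `(u t)` i.i.d. with mean zero
and finite variance, and `x t / t → 0` almost surely, for every `γ > 0` the quantity
`T ^ (1 - γ) * (α̂₁ - α) = T ^ (-γ) * ∑_{t=1}^T u t / z t` tends to `0` in probability. -/
theorem ratio_estimator_superconsistent
    {Ω : Type*} [MeasurableSpace Ω] (P : Measure Ω) [IsProbabilityMeasure P]
    (b z₀ : ℝ) (hb : b ≠ 0)
    (u x : ℕ → Ω → ℝ)
    (hu_meas : ∀ t, Measurable (u t)) (hx_meas : ∀ t, Measurable (x t))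
    (hu_indep : iIndepFun u P)
    (hu_ident : ∀ t, IdentDistrib (u t) (u 1) P P)
    (hu_int : Integrable (u 1) P)
    (hu_mean : ∫ ω, u 1 ω ∂P = 0)
    (hu_var : evariance (u 1) P < ⊤)
    (z : ℕ → Ω → ℝ) (hz : ∀ t ω, z t ω = z₀ + b * t + x t ω)
    (hx_lln : ∀ᵐ ω ∂P, Tendsto (fun t : ℕ => x t ω / t) atTop (𝓝 0))
    (hz_ne : ∀ t, ∀ᵐ ω ∂P, z t ω ≠ 0) :
    ∀ γ : ℝ, 0 < γ →
      TendstoInMeasure P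
        (fun (T : ℕ) ω => (T : ℝ) ^ (-γ) * ∑ t ∈ Finset.Icc 1 T, u t ω / z t ω)
        atTop (fun _ => 0) := by
  intro γ hγ
  have hz_meas : ∀ t, Measurable (z t) := by
    intro t
    have : z t = fun ω => z₀ + b * t + x t ω := funext (hz t)
    rw [this]
    exact (measurable_const.add measurable_const).add (hx_meas t)
  -- SLLN for |u|
  have habs_int : Integrable (fun ω => |u 0 ω|) P :=
    ((hu_ident 0).norm.integrable_iff).2 hu_int.norm
  have habs_indep : Pairwise (Function.onFun (IndepFun · · P) (fun t ω => |u t ω|)) := by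
    intro i j hij
    exact (hu_indep.indepFun hij).comp measurable_abs measurable_abs
  have habs_ident : ∀ i, IdentDistrib (fun ω => |u i ω|) (fun ω => |u 0 ω|) P P :=
    fun i => ((hu_ident i).trans (hu_ident 0).symm).comp measurable_abs
  have hslln := strong_law_ae_real (fun t ω => |u t ω|) habs_int habs_indep habs_ident
  -- a.e. convergence
  have hae : ∀ᵐ ω ∂P, Tendsto
      (fun T : ℕ => (T : ℝ) ^ (-γ) * ∑ t ∈ Finset.Icc 1 T, u t ω / z t ω)
      atTop (𝓝 0) := by
    filter_upwards [hx_lln, hslln] with ω hx hu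
    -- linear bound on partial sums of |u|
    obtain ⟨C0, hC0⟩ := hu.bddAbove_range
    simp only [mem_upperBounds, Set.mem_range, forall_exists_index] at hC0
    set C1 := max C0 0 with hC1
    have hC1nn : (0 : ℝ) ≤ C1 := le_max_right _ _
    have hSbound : ∀ T : ℕ, 1 ≤ T → ∑ t ∈ Finset.Icc 1 T, |u t ω| ≤ (2 * C1) * T := by
      intro T hT
      have hsub : ∑ t ∈ Finset.Icc 1 T, |u t ω| ≤ ∑ t ∈ Finset.range (T + 1), |u t ω| := by
        refine Finset.sum_le_sum_of_subset_of_nonneg ?_ (fun t _ _ => abs_nonneg _)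
        intro t ht
        simp only [Finset.mem_Icc, Finset.mem_range] at *
        omega
      have hA : (∑ t ∈ Finset.range (T + 1), |u t ω|) / (T + 1 : ℕ) ≤ C0 :=
        hC0 _ (T + 1) rfl
      have hTpos : (0 : ℝ) < ((T : ℝ) + 1) := by positivity
      have h1 : ∑ t ∈ Finset.range (T + 1), |u t ω| ≤ C0 * ((T : ℝ) + 1) := by
        rw [div_le_iff₀ (by exact_mod_cast hTpos)] at hA
        push_cast at hA ⊢
        linarith
      have hT1 : (1 : ℝ) ≤ (T : ℝ) := by exact_mod_cast hT
      have : C0 * ((T : ℝ) + 1) ≤ C1 * (2 * T) := by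
        have h01 : C0 ≤ C1 := le_max_left _ _
        nlinarith
      calc ∑ t ∈ Finset.Icc 1 T, |u t ω| ≤ C0 * ((T : ℝ) + 1) := le_trans hsub h1
        _ ≤ (2 * C1) * T := by linarith
    -- eventual lower bound on |z t ω|
    have hzt : Tendsto (fun t : ℕ => z t ω / t) atTop (𝓝 b) := by
      have h0 : Tendsto (fun t : ℕ => z₀ * (1 / (t : ℝ)) + b + x t ω / t) atTop
          (𝓝 (z₀ * 0 + b + 0)) :=
        ((tendsto_one_div_atTop_nhds_zero_nat.const_mul z₀).add_const b).add hx
      rw [mul_zero, zero_add, add_zero] at h0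
      refine h0.congr' ?_
      filter_upwards [eventually_ge_atTop 1] with t ht
      have htpos : ((t : ℝ)) ≠ 0 := by positivity
      rw [hz t ω]
      field_simp
    have hzl : ∀ᶠ t : ℕ in atTop, (|b| / 2) * t ≤ |z t ω| := by
      have hev := Metric.tendsto_nhds.mp hzt (|b| / 2) (by positivity)
      filter_upwards [hev, eventually_ge_atTop 1] with t hdist ht1
      have htpos : (0 : ℝ) < (t : ℝ) := by exact_mod_cast ht1
      rw [Real.dist_eq] at hdist
      have h1 : |b| - |z t ω / t| ≤ |z t ω / t - b| := by
        have := abs_sub_abs_le_abs_sub b (z t ω / t)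
        rw [abs_sub_comm] at this
        linarith
      have h2 : |b| / 2 ≤ |z t ω / t| := by linarith
      rw [abs_div, abs_of_pos htpos] at h2
      rw [le_div_iff₀ htpos] at h2
      linarith
    exact aux_det_tendsto (by positivity : (0:ℝ) < |b| / 2)
      (by positivity : (0:ℝ) ≤ 2 * C1) hzl hSbound hγ
  -- measurability + a.e. convergence gives convergence in measure
  have hmeas : ∀ T : ℕ, AEStronglyMeasurable
      (fun ω => (T : ℝ) ^ (-γ) * ∑ t ∈ Finset.Icc 1 T, u t ω / z t ω) P := by
    intro T
    refine (Measurable.const_mul ?_ _).aestronglyMeasurable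
    exact Finset.measurable_sum _ (fun t _ => (hu_meas t).div (hz_meas t))
  exact tendstoInMeasure_of_tendsto_ae hmeas hae
end

section
/- Let α, z₀ be real constants and b ≠ 0, set z_t = z₀ + b·t for integers t ≥ 1, let σ² > 0, let (u_t)_{t≥1} be i.i.d. with u_t ~ N(0, σ²), and set y_t = α z_t + u_t. Then the regression-based estimator α̂₂ = (Σ_{t=1}^{T} z_t²)^{-1} Σ_{t=1}^{T} z_t y_t (defined for T large enough that Σ_{t=1}^{T} z_t² > 0) satisfies T^{3/2} (α̂₂ − α) → N(0, 3σ²/b²) in distribution as T → ∞. In particular, in the case of a deterministic linear emissions trend with Gaussian errors, the regression-based estimator converges to α at the rate T^{3/2} with a Gaussian limiting distribution. -/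
open MeasureTheory ProbabilityTheory Filter
open scoped NNReal Topology
open Real
open scoped ENNReal

lemma gauss_conv_pdf {p q : ℝ≥0} (hp : p ≠ 0) (hq : q ≠ 0) (z : ℝ) :
    ∫ x, gaussianPDFReal 0 p x * gaussianPDFReal 0 q (z - x) = gaussianPDFReal 0 (p + q) z := by
  have hP : (0:ℝ) < p := lt_of_le_of_ne (p.coe_nonneg) (by exact_mod_cast (Ne.symm hp))
  have hQ : (0:ℝ) < q := lt_of_le_of_ne (q.coe_nonneg) (by exact_mod_cast (Ne.symm hq))
  set P : ℝ := (p:ℝ)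
  set Q : ℝ := (q:ℝ)
  have hPQ : (0:ℝ) < P + Q := by positivity
  set a : ℝ := (P + Q) / (2 * P * Q) with ha_def
  have ha : 0 < a := by positivity
  set c : ℝ := P * z / (P + Q) with hc_def
  have key : ∀ x : ℝ, gaussianPDFReal 0 p x * gaussianPDFReal 0 q (z - x)
      = ((Real.sqrt (2 * π * P))⁻¹ * (Real.sqrt (2 * π * Q))⁻¹ *
          Real.exp (- z ^ 2 / (2 * (P + Q)))) * Real.exp (-a * (x - c) ^ 2) := by
    intro x
    simp only [gaussianPDFReal]
    have h1 : P ≠ 0 := ne_of_gt hP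
    have h2 : Q ≠ 0 := ne_of_gt hQ
    have h3 : P + Q ≠ 0 := ne_of_gt hPQ
    have hexp : -(x - 0) ^ 2 / (2 * P) + -(z - x - 0) ^ 2 / (2 * Q)
        = -z ^ 2 / (2 * (P + Q)) + -a * (x - c) ^ 2 := by
      rw [ha_def, hc_def]; field_simp; ring
    rw [mul_mul_mul_comm, ← Real.exp_add, hexp, Real.exp_add]
    ring
  rw [MeasureTheory.integral_congr_ae (Filter.Eventually.of_forall key)]
  rw [MeasureTheory.integral_const_mul]
  have hints : ∫ x : ℝ, Real.exp (-a * (x - c) ^ 2) = Real.sqrt (π / a) := by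
    rw [integral_sub_right_eq_self (fun x => Real.exp (-a * x ^ 2)) c]
    exact integral_gaussian a
  rw [hints]
  have hπa : π / a = (2 * π * P) * (2 * π * Q) / (2 * π * (P + Q)) := by
    rw [ha_def]; field_simp
  have hsq : Real.sqrt (π / a)
      = Real.sqrt (2 * π * P) * Real.sqrt (2 * π * Q) / Real.sqrt (2 * π * (P + Q)) := by
    rw [hπa, Real.sqrt_div (by positivity), Real.sqrt_mul (by positivity)]
  rw [hsq]
  simp only [gaussianPDFReal, NNReal.coe_add]
  have s1 : Real.sqrt (2 * π * P) ≠ 0 := by positivity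
  have s2 : Real.sqrt (2 * π * Q) ≠ 0 := by positivity
  have s3 : Real.sqrt (2 * π * (P + Q)) ≠ 0 := by positivity
  rw [sub_zero]
  field_simp
  rw [mul_comm]

lemma gauss_pdf_le (q : ℝ≥0) (y : ℝ) :
    gaussianPDFReal 0 q y ≤ (Real.sqrt (2 * π * q))⁻¹ := by
  unfold gaussianPDFReal
  have : Real.exp (-(y - 0) ^ 2 / (2 * q)) ≤ 1 := by
    apply Real.exp_le_one_iff.mpr
    apply div_nonpos_of_nonpos_of_nonneg
    · simp [sq_nonneg]
    · positivity
  calc (Real.sqrt (2 * π * q))⁻¹ * Real.exp (-(y - 0) ^ 2 / (2 * q))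
      ≤ (Real.sqrt (2 * π * q))⁻¹ * 1 := by
        apply mul_le_mul_of_nonneg_left this (by positivity)
    _ = _ := mul_one _

lemma gauss_conv_integrable (p q : ℝ≥0) (z : ℝ) :
    Integrable (fun x => gaussianPDFReal 0 p x * gaussianPDFReal 0 q (z - x)) := by
  apply Integrable.mono' ((integrable_gaussianPDFReal 0 p).const_mul (Real.sqrt (2 * π * q))⁻¹)
  · exact ((measurable_gaussianPDFReal 0 p).mul
      ((measurable_gaussianPDFReal 0 q).comp (measurable_const.sub measurable_id))).aestronglyMeasurable
  · refine Filter.Eventually.of_forall fun x => ?_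
    rw [Real.norm_eq_abs, abs_of_nonneg (mul_nonneg (gaussianPDFReal_nonneg _ _ _)
      (gaussianPDFReal_nonneg _ _ _)), mul_comm ((Real.sqrt (2 * π * q))⁻¹)]
    exact mul_le_mul_of_nonneg_left (gauss_pdf_le q (z - x)) (gaussianPDFReal_nonneg _ _ _)

lemma gauss_map_add {Ω : Type*} [MeasurableSpace Ω] (P : Measure Ω) [IsProbabilityMeasure P]
    {X Y : Ω → ℝ} (hX : Measurable X) (hY : Measurable Y) (hXY : IndepFun X Y P)
    {p q : ℝ≥0} (hmX : Measure.map X P = gaussianReal 0 p)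
    (hmY : Measure.map Y P = gaussianReal 0 q) :
    Measure.map (fun ω => X ω + Y ω) P = gaussianReal 0 (p + q) := by
  by_cases hp : p = 0
  · subst hp
    rw [gaussianReal_zero_var] at hmX
    have hX0 : ∀ᵐ ω ∂P, X ω = 0 := by
      have h1 : P (X ⁻¹' {0}) = 1 := by
        rw [← Measure.map_apply hX (measurableSet_singleton 0), hmX]; simp
      have h2 := measure_compl (hX (measurableSet_singleton 0)) (measure_ne_top P _)
      rw [h1, measure_univ, tsub_self] at h2
      rw [ae_iff]
      have h3 : {ω | ¬ X ω = 0} = (X ⁻¹' {0})ᶜ := by ext ω; simp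
      rw [h3]; exact h2
    have heq : (fun ω => X ω + Y ω) =ᵐ[P] Y := hX0.mono fun ω h => by simp only [h, zero_add]
    rw [Measure.map_congr heq, hmY, zero_add]
  by_cases hq : q = 0
  · subst hq
    rw [gaussianReal_zero_var] at hmY
    have hY0 : ∀ᵐ ω ∂P, Y ω = 0 := by
      have h1 : P (Y ⁻¹' {0}) = 1 := by
        rw [← Measure.map_apply hY (measurableSet_singleton 0), hmY]; simp
      have h2 := measure_compl (hY (measurableSet_singleton 0)) (measure_ne_top P _)
      rw [h1, measure_univ, tsub_self] at h2
      rw [ae_iff]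
      have h3 : {ω | ¬ Y ω = 0} = (Y ⁻¹' {0})ᶜ := by ext ω; simp
      rw [h3]; exact h2
    have heq : (fun ω => X ω + Y ω) =ᵐ[P] X := hY0.mono fun ω h => by simp only [h, add_zero]
    rw [Measure.map_congr heq, hmX, add_zero]
  have hpq : p + q ≠ 0 := by simp [hp, hq]
  have hjoint := (indepFun_iff_map_prod_eq_prod_map_map hX.aemeasurable hY.aemeasurable).mp hXY
  ext s hs
  rw [Measure.map_apply (f := fun ω => X ω + Y ω) (hX.add hY) hs]
  have hpre : (fun ω => X ω + Y ω) ⁻¹' s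
      = (fun ω => (X ω, Y ω)) ⁻¹' ((fun pr : ℝ × ℝ => pr.1 + pr.2) ⁻¹' s) := rfl
  rw [hpre, ← Measure.map_apply (hX.prodMk hY) (measurable_add hs), hjoint, hmX, hmY,
    Measure.prod_apply (measurable_add hs)]
  have h1 : ∀ x : ℝ, (gaussianReal 0 q) (Prod.mk x ⁻¹' ((fun pr : ℝ × ℝ => pr.1 + pr.2) ⁻¹' s))
      = ∫⁻ y in s, ENNReal.ofReal (gaussianPDFReal 0 q (y - x)) ∂volume := by
    intro x
    have h2 : Prod.mk x ⁻¹' ((fun pr : ℝ × ℝ => pr.1 + pr.2) ⁻¹' s)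
        = (fun y => x + y) ⁻¹' s := rfl
    rw [h2, ← Measure.map_apply (by fun_prop : Measurable fun y : ℝ => x + y) hs,
      gaussianReal_map_const_add, zero_add, gaussianReal_apply _ hq s]
    refine setLIntegral_congr_fun hs (fun y _ => ?_)
    rw [gaussianPDF, gaussianPDFReal_sub, zero_add]
  simp_rw [h1]
  have hm_unc : Measurable (Function.uncurry fun x y =>
      ENNReal.ofReal (gaussianPDFReal 0 q (y - x))) :=
    ((measurable_gaussianPDFReal 0 q).comp (measurable_snd.sub measurable_fst)).ennreal_ofReal
  have hmg : Measurable fun x => ∫⁻ y in s, ENNReal.ofReal (gaussianPDFReal 0 q (y - x)) ∂volume :=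
    Measurable.lintegral_prod_right hm_unc
  rw [gaussianReal_of_var_ne_zero 0 hp,
    lintegral_withDensity_eq_lintegral_mul volume (measurable_gaussianPDF 0 p) hmg]
  simp only [Pi.mul_apply, gaussianPDF]
  have hstep : ∀ x : ℝ, ENNReal.ofReal (gaussianPDFReal 0 p x) *
        ∫⁻ y in s, ENNReal.ofReal (gaussianPDFReal 0 q (y - x)) ∂volume
      = ∫⁻ y in s, ENNReal.ofReal (gaussianPDFReal 0 p x * gaussianPDFReal 0 q (y - x)) ∂volume := by
    intro x
    rw [← lintegral_const_mul' _ _ ENNReal.ofReal_ne_top]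
    simp_rw [← ENNReal.ofReal_mul (gaussianPDFReal_nonneg 0 p x)]
  simp_rw [hstep]
  rw [lintegral_lintegral_swap]
  swap
  · exact (((measurable_gaussianPDFReal 0 p).comp measurable_fst).mul
      ((measurable_gaussianPDFReal 0 q).comp (measurable_snd.sub measurable_fst))).ennreal_ofReal.aemeasurable
  have hinner : ∀ y : ℝ, (∫⁻ x, ENNReal.ofReal
        (gaussianPDFReal 0 p x * gaussianPDFReal 0 q (y - x)) ∂volume)
      = ENNReal.ofReal (gaussianPDFReal 0 (p + q) y) := by
    intro y
    rw [← ofReal_integral_eq_lintegral_ofReal (gauss_conv_integrable p q y)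
      (Filter.Eventually.of_forall fun x => mul_nonneg (gaussianPDFReal_nonneg _ _ _)
        (gaussianPDFReal_nonneg _ _ _)), gauss_conv_pdf hp hq y]
  simp_rw [hinner]
  rw [gaussianReal_apply _ hpq s]
  rfl

lemma gauss_map_sum {Ω : Type*} [MeasurableSpace Ω] (P : Measure Ω) [IsProbabilityMeasure P]
    (u : ℕ → Ω → ℝ) (hm : ∀ t, Measurable (u t))
    (hi : iIndepFun u P) (w : ℕ → ℝ≥0)
    (hg : ∀ t, Measure.map (u t) P = gaussianReal 0 (w t)) (s : Finset ℕ) :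
    Measure.map (fun ω => ∑ t ∈ s, u t ω) P = gaussianReal 0 (∑ t ∈ s, w t) := by
  classical
  induction s using Finset.induction_on with
  | empty =>
      simp only [Finset.sum_empty]
      rw [show (fun _ : Ω => (0:ℝ)) = fun _ => (0:ℝ) from rfl, Measure.map_const,
        gaussianReal_zero_var]
      simp
  | insert i s' hnotmem ih =>
      simp only [Finset.sum_insert hnotmem]
      have hYsum : (fun ω => ∑ t ∈ s', u t ω) = ∑ j ∈ s', u j := by
        ext ω; rw [Finset.sum_apply]
      have hXY : IndepFun (u i) (fun ω => ∑ t ∈ s', u t ω) P := by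
        rw [hYsum]
        exact (hi.indepFun_finsetSum_of_notMem hm hnotmem).symm
      exact gauss_map_add P (hm i) (Finset.measurable_sum s' fun t _ => hm t) hXY (hg i) ih

lemma gauss_integral_eq (f : BoundedContinuousFunction ℝ ℝ) (w : ℝ≥0) :
    ∫ x, f x ∂(gaussianReal 0 w) = ∫ x, f (Real.sqrt w * x) ∂(gaussianReal 0 1) := by
  have hmap : (gaussianReal 0 1).map (fun x => Real.sqrt w * x) = gaussianReal 0 w := by
    rw [show (fun x : ℝ => Real.sqrt w * x) = (Real.sqrt w * ·) from rfl,
      gaussianReal_map_const_mul, mul_zero]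
    congr 1
    ext
    simp [Real.sq_sqrt w.coe_nonneg]
  rw [← hmap, integral_map (by fun_prop) f.continuous.aestronglyMeasurable]

noncomputable def regQ (z₀ b : ℝ) (T : ℕ) : ℝ := ∑ t ∈ Finset.Icc 1 T, (z₀ + b * t) ^ 2

lemma regQ_closed (z₀ b : ℝ) (T : ℕ) :
    regQ z₀ b T = T * z₀ ^ 2 + z₀ * b * T * (T + 1) + b ^ 2 * (T * (T + 1) * (2 * T + 1)) / 6 := by
  induction T with
  | zero => simp [regQ]
  | succ n ih =>
      rw [regQ, Finset.sum_Icc_succ_top (Nat.one_le_iff_ne_zero.mpr (Nat.succ_ne_zero n)),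
        ← regQ, ih]
      push_cast
      ring

lemma regQ_tendsto (z₀ b : ℝ) :
    Tendsto (fun T : ℕ => regQ z₀ b T / (T : ℝ) ^ 3) atTop (𝓝 (b ^ 2 / 3)) := by
  have hg : Tendsto (fun x : ℝ => z₀ ^ 2 * x ^ 2 + z₀ * b * (1 + x) * x
      + b ^ 2 * ((1 + x) * (2 + x)) / 6) (𝓝 0) (𝓝 (b ^ 2 / 3)) := by
    have hc : Continuous fun x : ℝ => z₀ ^ 2 * x ^ 2 + z₀ * b * (1 + x) * x
        + b ^ 2 * ((1 + x) * (2 + x)) / 6 := by continuity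
    have := hc.tendsto 0
    convert this using 2
    norm_num
    ring
  have hcomp := hg.comp tendsto_one_div_atTop_nhds_zero_nat
  apply hcomp.congr'
  filter_upwards [eventually_ge_atTop 1] with T hT
  have hT0 : (T : ℝ) ≠ 0 := by
    exact_mod_cast Nat.one_le_iff_ne_zero.mp hT
  simp only [Function.comp_apply, regQ_closed]
  field_simp


/-- Asymptotic normality of the regression-based estimator at rate `T^(3/2)`: in the model
`y t = α * z t + u t` with deterministic trend `z t = z₀ + b * t`, `b ≠ 0`, and `(u t)`
i.i.d. `N(0, v)` with `v > 0`, the least-squares estimator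
`α̂₂ = (∑_{t=1}^T z t ^ 2)⁻¹ ∑_{t=1}^T z t * y t` satisfies
`T^(3/2) * (α̂₂ - α) → N(0, 3 v / b²)` in distribution (weak convergence tested against
bounded continuous functions). -/
theorem regression_estimator_asymptotically_gaussian
    {Ω : Type*} [MeasurableSpace Ω] (P : Measure Ω) [IsProbabilityMeasure P]
    (α b z₀ : ℝ) (hb : b ≠ 0)
    (v : ℝ≥0) (hv : 0 < v)
    (u : ℕ → Ω → ℝ)
    (hu_meas : ∀ t, Measurable (u t))
    (hu_indep : iIndepFun u P)
    (hu_gauss : ∀ t, Measure.map (u t) P = gaussianReal 0 v)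
    (y : ℕ → Ω → ℝ) (hy : ∀ t ω, y t ω = α * (z₀ + b * t) + u t ω) :
    ∀ f : BoundedContinuousFunction ℝ ℝ,
      Tendsto
        (fun T : ℕ =>
          ∫ ω, f ((T : ℝ) ^ ((3 : ℝ) / 2) *
            ((∑ t ∈ Finset.Icc 1 T, (z₀ + b * t) * y t ω) /
              (∑ t ∈ Finset.Icc 1 T, (z₀ + b * t) ^ 2) - α)) ∂P)
        atTop
        (𝓝 (∫ x, f x ∂(gaussianReal 0 (3 * v / (b ^ 2).toNNReal)))) := by
  intro f
  have hbsq : (0:ℝ) < b ^ 2 := by positivity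
  -- notation
  set Q : ℕ → ℝ := regQ z₀ b with hQdef
  set c : ℕ → ℝ := fun T => (T : ℝ) ^ ((3 : ℝ) / 2) / Q T with hcdef
  set sfun : ℕ → ℝ := fun T => Real.sqrt ((c T) ^ 2 * (Q T * v)) with hsdef
  set L : ℝ := Real.sqrt ((3 * v / (b ^ 2).toNNReal : ℝ≥0) : ℝ) with hLdef
  have hLcoe : ((3 * (v:ℝ≥0) / (b ^ 2).toNNReal : ℝ≥0) : ℝ) = 3 * (v:ℝ) / b ^ 2 := by
    rw [NNReal.coe_div, NNReal.coe_mul, Real.coe_toNNReal _ (sq_nonneg b)]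
    norm_num
  -- eventual positivity of Q
  have hQT := regQ_tendsto z₀ b
  have hQpos : ∀ᶠ T : ℕ in atTop, 0 < Q T := by
    have h1 : ∀ᶠ T : ℕ in atTop, 0 < Q T / (T : ℝ) ^ 3 :=
      hQT.eventually (eventually_gt_nhds (by positivity))
    filter_upwards [h1, eventually_ge_atTop 1] with T h hT1
    have hT3 : (0:ℝ) < (T : ℝ) ^ 3 := by
      have : (0:ℝ) < (T:ℝ) := by exact_mod_cast hT1
      positivity
    rcases div_pos_iff.mp h with ⟨h', _⟩ | ⟨_, h'⟩
    · exact h'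
    · linarith
  -- convergence of sfun to L
  have hs_tendsto : Tendsto sfun atTop (𝓝 L) := by
    have hinv : Tendsto (fun T : ℕ => (T : ℝ) ^ 3 / Q T * v) atTop (𝓝 (3 / b ^ 2 * v)) := by
      have h1 := (hQT.inv₀ (by positivity)).mul_const (v:ℝ)
      simpa only [inv_div] using h1
    have h2 : Tendsto (fun T : ℕ => Real.sqrt ((T : ℝ) ^ 3 / Q T * v)) atTop (𝓝 L) := by
      have := (Real.continuous_sqrt.tendsto (3 / b ^ 2 * v)).comp hinv
      convert this using 2
      · rfl
      rw [hLdef, hLcoe]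
      ring_nf
    apply h2.congr'
    filter_upwards [hQpos, eventually_ge_atTop 1] with T hQ hT1
    have hQne : Q T ≠ 0 := ne_of_gt hQ
    have hTnn : (0:ℝ) ≤ (T:ℝ) := Nat.cast_nonneg T
    have hpow : ((T : ℝ) ^ ((3 : ℝ) / 2)) ^ 2 = (T : ℝ) ^ 3 := by
      rw [← Real.rpow_natCast ((T : ℝ) ^ ((3 : ℝ) / 2)) 2, ← Real.rpow_mul hTnn,
        ← Real.rpow_natCast (T : ℝ) 3]
      norm_num
    simp only [hsdef, hcdef, div_pow, hpow]
    congr 1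
    field_simp
  -- the standard gaussian
  have hγ : IsProbabilityMeasure (gaussianReal 0 1) := by infer_instance
  -- main eventual equality
  have hmain : (fun T : ℕ =>
        ∫ ω, f ((T : ℝ) ^ ((3 : ℝ) / 2) *
          ((∑ t ∈ Finset.Icc 1 T, (z₀ + b * t) * y t ω) /
            (∑ t ∈ Finset.Icc 1 T, (z₀ + b * t) ^ 2) - α)) ∂P)
      =ᶠ[atTop] fun T => ∫ x, f (sfun T * x) ∂(gaussianReal 0 1) := by
    filter_upwards [hQpos] with T hQ
    have hQne : Q T ≠ 0 := ne_of_gt hQ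
    set S : Ω → ℝ := fun ω => ∑ t ∈ Finset.Icc 1 T, (z₀ + b * t) * u t ω with hSdef
    have hSmeas : Measurable S :=
      Finset.measurable_sum _ fun t _ => (hu_meas t).const_mul _
    have hE : ∀ ω, (T : ℝ) ^ ((3 : ℝ) / 2) *
        ((∑ t ∈ Finset.Icc 1 T, (z₀ + b * t) * y t ω) /
          (∑ t ∈ Finset.Icc 1 T, (z₀ + b * t) ^ 2) - α) = c T * S ω := by
      intro ω
      have hsum : (∑ t ∈ Finset.Icc 1 T, (z₀ + b * t) * y t ω)
          = α * Q T + ∑ t ∈ Finset.Icc 1 T, (z₀ + b * t) * u t ω := by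
        rw [hQdef, regQ, Finset.mul_sum, ← Finset.sum_add_distrib]
        exact Finset.sum_congr rfl fun t _ => by rw [hy]; ring
      have hden : (∑ t ∈ Finset.Icc 1 T, (z₀ + b * t) ^ 2) = Q T := rfl
      rw [hden, hsum]
      have hrw : (α * Q T + (∑ t ∈ Finset.Icc 1 T, (z₀ + b * t) * u t ω)) / Q T - α
          = (∑ t ∈ Finset.Icc 1 T, (z₀ + b * t) * u t ω) / Q T := by
        field_simp
        ring
      rw [hrw]
      simp only [hcdef, hSdef]
      ring
    -- law of S
    have hSlaw : Measure.map S P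
        = gaussianReal 0 (∑ t ∈ Finset.Icc 1 T, ((NNReal.mk ((z₀ + b * t) ^ 2) (sq_nonneg _)) * v : ℝ≥0)) := by
      have hind : iIndepFun (fun t ω => (z₀ + b * t) * u t ω) P :=
        hu_indep.comp (fun t x => (z₀ + b * t) * x) fun t => measurable_const_mul _
      have hlaw : ∀ t : ℕ, Measure.map (fun ω => (z₀ + b * t) * u t ω) P
          = gaussianReal 0 ((NNReal.mk ((z₀ + b * t) ^ 2) (sq_nonneg _)) * v : ℝ≥0) := by
        intro t
        rw [show (fun ω => (z₀ + b * t) * u t ω) = ((z₀ + b * t) * ·) ∘ u t from rfl,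
          ← Measure.map_map (measurable_const_mul _) (hu_meas t), hu_gauss t,
          gaussianReal_map_const_mul, mul_zero]
      exact gauss_map_sum P (fun t ω => (z₀ + b * t) * u t ω)
        (fun t => (hu_meas t).const_mul _) hind _ hlaw (Finset.Icc 1 T)
    -- law of c T * S
    have hWlaw : Measure.map (fun ω => c T * S ω) P
        = gaussianReal 0 (((NNReal.mk ((c T) ^ 2) (sq_nonneg _)) *
            ∑ t ∈ Finset.Icc 1 T, ((NNReal.mk ((z₀ + b * t) ^ 2) (sq_nonneg _)) * v : ℝ≥0) : ℝ≥0)) := by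
      rw [show (fun ω => c T * S ω) = (c T * ·) ∘ S from rfl,
        ← Measure.map_map (measurable_const_mul _) hSmeas, hSlaw,
        gaussianReal_map_const_mul, mul_zero]
    -- coercion computation
    have hcoe : ((((NNReal.mk ((c T) ^ 2) (sq_nonneg _)) *
          ∑ t ∈ Finset.Icc 1 T, ((NNReal.mk ((z₀ + b * t) ^ 2) (sq_nonneg _)) * v : ℝ≥0) : ℝ≥0)) : ℝ)
        = (c T) ^ 2 * (Q T * v) := by
      push_cast
      rw [← Finset.sum_mul]
      rfl
    calc ∫ ω, f ((T : ℝ) ^ ((3 : ℝ) / 2) *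
            ((∑ t ∈ Finset.Icc 1 T, (z₀ + b * t) * y t ω) /
              (∑ t ∈ Finset.Icc 1 T, (z₀ + b * t) ^ 2) - α)) ∂P
        = ∫ ω, f (c T * S ω) ∂P := by
          exact integral_congr_ae (Filter.Eventually.of_forall fun ω => congrArg f (hE ω))
      _ = ∫ x, f x ∂(Measure.map (fun ω => c T * S ω) P) :=
          (integral_map (hSmeas.const_mul _).aemeasurable f.continuous.aestronglyMeasurable).symm
      _ = ∫ x, f (sfun T * x) ∂(gaussianReal 0 1) := by
          rw [hWlaw, gauss_integral_eq, hsdef]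
          simp only [hcoe]
  rw [tendsto_congr' hmain]
  -- dominated convergence
  have hfinal : Tendsto (fun T => ∫ x, f (sfun T * x) ∂(gaussianReal 0 1)) atTop
      (𝓝 (∫ x, f (L * x) ∂(gaussianReal 0 1))) := by
    apply tendsto_integral_of_dominated_convergence (fun _ => ‖f‖)
    · exact fun T => (f.continuous.comp (continuous_const.mul continuous_id)).aestronglyMeasurable
    · exact integrable_const _
    · exact fun T => Filter.Eventually.of_forall fun x => f.norm_coe_le_norm _
    · exact Filter.Eventually.of_forall fun x =>
        (f.continuous.tendsto _).comp (hs_tendsto.mul_const x)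
  convert hfinal using 2
  rw [gauss_integral_eq f (3 * v / (b ^ 2).toNNReal), hLdef]
end
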